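/- Let λ ∈ ℝ with λ > r̄ := max_{x∈S} r(x), and let μ be a nonzero λ-eigenmeasure of r̃+J̃. Then μ is absolutely continuous with respect to Lebesgue measure, with density u(x) = (∫_S K(y,x) μ(dy)) / (λ − r(x)), which is continuous and strictly positive on S and satisfies r(x)u(x) + ∫_S K(y,x)u(y)dy = λ u(x) for every x ∈ S. -/

import Mathlib

open MeasureTheory Filter Topology

/-- A finite positive Borel measure μ on S is a λ-eigenmeasure of the operator r̃+J̃ if for
every Borel set A ⊆ S one has ∫_A r dμ + ∫_A (∫_S K(y,x) μ(dy)) dx = λ μ(A). -/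
def IsEigenmeasure {d : ℕ} (S : Set (EuclideanSpace ℝ (Fin d)))
    (r : EuclideanSpace ℝ (Fin d) → ℝ)
    (K : EuclideanSpace ℝ (Fin d) → EuclideanSpace ℝ (Fin d) → ℝ)
    (lam : ℝ) (μ : MeasureTheory.Measure (EuclideanSpace ℝ (Fin d))) : Prop :=
  ∀ A : Set (EuclideanSpace ℝ (Fin d)), MeasurableSet A → A ⊆ S →
    (∫ x in A, r x ∂μ) + (∫ x in A, (∫ y in S, K y x ∂μ)) = lam * (μ A).toReal

/-- Tietze extension for a function continuous on a closed set. -/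
lemma stmt5_aux_ext {X : Type*} [TopologicalSpace X] [NormalSpace X] {S : Set X}
    (hS : IsClosed S) {f : X → ℝ} (hf : ContinuousOn f S) :
    ∃ g : X → ℝ, Continuous g ∧ ∀ x ∈ S, g x = f x := by
  obtain ⟨g, hg⟩ := ContinuousMap.exists_restrict_eq (Y := ℝ) hS ⟨S.restrict f, hf.restrict⟩
  exact ⟨g, g.continuous, fun x hx => ContinuousMap.congr_fun hg ⟨x, hx⟩⟩

/-- If λ > r̄ = max_S r and μ is a nonzero λ-eigenmeasure of r̃+J̃, then μ has the continuous
strictly positive density u(x) = (∫_S K(y,x) μ(dy)) / (λ − r(x)) with respect to Lebesgue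
measure, and u satisfies (r+J)u = λu on S. -/
theorem stmt5 {d : ℕ}
    (Ω S : Set (EuclideanSpace ℝ (Fin d)))
    (hΩne : Ω.Nonempty) (hΩopen : IsOpen Ω) (hΩbdd : Bornology.IsBounded Ω)
    (hΩconn : IsConnected Ω) (hSdef : S = closure Ω)
    (hScomp : IsCompact S) (hSvol : 0 < volume S)
    (r : EuclideanSpace ℝ (Fin d) → ℝ) (hr : ContinuousOn r S)
    (hrpos : ∀ x ∈ S, 0 < r x)
    (K : EuclideanSpace ℝ (Fin d) → EuclideanSpace ℝ (Fin d) → ℝ)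
    (hK : ContinuousOn (fun q : EuclideanSpace ℝ (Fin d) × EuclideanSpace ℝ (Fin d) =>
      K q.1 q.2) (S ×ˢ S))
    (hKnn : ∀ x ∈ S, ∀ y ∈ S, 0 ≤ K x y)
    (ε₀ c₀ : ℝ) (hε₀ : 0 < ε₀) (hc₀ : 0 < c₀)
    (hKlb : ∀ x ∈ S, ∀ y ∈ S, dist y x < ε₀ → c₀ < K x y)
    (μ : Measure (EuclideanSpace ℝ (Fin d))) [IsFiniteMeasure μ]
    (hμne : μ ≠ 0) (hμS : μ Sᶜ = 0)
    (lam : ℝ) (hμ : IsEigenmeasure S r K lam μ)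
    (rbar : ℝ) (hrbar : IsGreatest (r '' S) rbar) (hlam : rbar < lam) :
    ∀ u : EuclideanSpace ℝ (Fin d) → ℝ,
      (∀ x, u x = (∫ y in S, K y x ∂μ) / (lam - r x)) →
      ContinuousOn u S ∧ (∀ x ∈ S, 0 < u x) ∧
      (∀ A : Set (EuclideanSpace ℝ (Fin d)), MeasurableSet A → A ⊆ S →
        (μ A).toReal = ∫ x in A, u x) ∧
      (∀ x ∈ S, r x * u x + (∫ y in S, K y x * u y) = lam * u x) := by
  intro u hu
  classical
  have hSclosed : IsClosed S := hScomp.isClosed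
  have hSmeas : MeasurableSet S := hSclosed.measurableSet
  have hSconn : IsPreconnected S := by
    rw [hSdef]; exact hΩconn.closure.isPreconnected
  have hΩsub : Ω ⊆ S := hSdef ▸ subset_closure
  have hSvolfin : volume S < ⊤ := hScomp.measure_lt_top
  set v : EuclideanSpace ℝ (Fin d) → ℝ := fun x => ∫ y in S, K y x ∂μ with hvdef
  have hμ' : ∀ A : Set (EuclideanSpace ℝ (Fin d)), MeasurableSet A → A ⊆ S →
      (∫ x in A, r x ∂μ) + (∫ x in A, v x) = lam * (μ A).toReal := fun A hA hAS => hμ A hA hAS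
  have hlr : ∀ x ∈ S, 0 < lam - r x := fun x hx =>
    sub_pos.2 (lt_of_le_of_lt (hrbar.2 (Set.mem_image_of_mem r hx)) hlam)
  obtain ⟨CK, hCK⟩ := (hScomp.prod hScomp).exists_bound_of_continuousOn hK
  have hKslice : ∀ x ∈ S, ContinuousOn (fun y => K y x) S := by
    intro x hx
    exact hK.comp (continuous_id.prodMk continuous_const).continuousOn
      (fun y hy => ⟨hy, hx⟩)
  have hKint : ∀ x ∈ S, Integrable (fun y => K y x) (μ.restrict S) := fun x hx =>
    (hKslice x hx).integrableOn_compact hScomp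
  -- continuity of v on S
  have hvcont : ContinuousOn v S := by
    intro x hx
    have hlim : Tendsto (fun x' => ∫ y in S, K y x' ∂μ) (𝓝[S] x)
        (𝓝 (∫ y in S, K y x ∂μ)) := by
      apply tendsto_integral_filter_of_dominated_convergence (fun _ => CK)
      · filter_upwards [self_mem_nhdsWithin] with x' hx'
        exact (hKslice x' hx').aestronglyMeasurable hSmeas
      · filter_upwards [self_mem_nhdsWithin] with x' hx'
        filter_upwards [ae_restrict_mem hSmeas] with y hy
        exact hCK (y, x') ⟨hy, hx'⟩
      · exact integrable_const _
      · filter_upwards [ae_restrict_mem hSmeas] with y hy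
        have h1 : ContinuousWithinAt
            (fun q : EuclideanSpace ℝ (Fin d) × EuclideanSpace ℝ (Fin d) => K q.1 q.2)
            (S ×ˢ S) (y, x) := hK (y, x) ⟨hy, hx⟩
        have h2 : Tendsto (fun x' => ((y : EuclideanSpace ℝ (Fin d)), x')) (𝓝[S] x)
            (𝓝[S ×ˢ S] (y, x)) := by
          apply tendsto_nhdsWithin_of_tendsto_nhds_of_eventually_within
          · exact ((continuous_const.prodMk continuous_id).tendsto x).mono_left
              nhdsWithin_le_nhds
          · filter_upwards [self_mem_nhdsWithin] with x' hx' using ⟨hy, hx'⟩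
        exact h1.tendsto.comp h2
    exact hlim
  have hvnn : ∀ x ∈ S, 0 ≤ v x := fun x hx =>
    setIntegral_nonneg hSmeas (fun y hy => hKnn y hy x hx)
  have hunn : ∀ x ∈ S, 0 ≤ u x := fun x hx => by
    rw [hu x]; exact div_nonneg (hvnn x hx) (hlr x hx).le
  have huv : ∀ x ∈ S, v x = u x * (lam - r x) := by
    intro x hx
    rw [hu x, div_mul_cancel₀]
    exact (hlr x hx).ne'
  have hucont : ContinuousOn u S := by
    have h1 : ContinuousOn (fun x => v x / (lam - r x)) S :=
      hvcont.div (continuousOn_const.sub hr) (fun x hx => (hlr x hx).ne')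
    exact h1.congr (fun x _ => hu x)
  -- integrability
  have hrint : IntegrableOn r S μ := hr.integrableOn_compact hScomp
  have hvint : IntegrableOn v S volume := hvcont.integrableOn_compact hScomp
  have huint : IntegrableOn u S volume := hucont.integrableOn_compact hScomp
  -- key identity
  have key : ∀ A : Set (EuclideanSpace ℝ (Fin d)), MeasurableSet A → A ⊆ S →
      ∫ x in A, (lam - r x) ∂μ = ∫ x in A, v x := by
    intro A hA hAS
    have h1 := hμ' A hA hAS
    rw [integral_sub (integrable_const lam) (hrint.mono_set hAS), setIntegral_const,
      smul_eq_mul, measureReal_def]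
    linarith
  -- Tietze extensions
  obtain ⟨R, hRcont, hRS⟩ := stmt5_aux_ext hSclosed hr
  obtain ⟨U, hUcont, hUS⟩ := stmt5_aux_ext hSclosed hucont
  set R' : EuclideanSpace ℝ (Fin d) → ℝ := fun x => min (R x) rbar with hR'def
  have hR'cont : Continuous R' := hRcont.min continuous_const
  have hR'S : ∀ x ∈ S, R' x = r x := by
    intro x hx
    rw [hR'def]
    simp only
    rw [hRS x hx, min_eq_left (hrbar.2 (Set.mem_image_of_mem r hx))]
  have hlamR : ∀ x, 0 < lam - R' x := fun x =>
    sub_pos.2 (lt_of_le_of_lt (min_le_right _ _) hlam)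
  set w : EuclideanSpace ℝ (Fin d) → ENNReal := fun x => ENNReal.ofReal (lam - R' x) with hwdef
  have hwmeas : Measurable w :=
    ENNReal.measurable_ofReal.comp (continuous_const.sub hR'cont).measurable
  have hwpos : ∀ x, w x ≠ 0 := fun x => (ENNReal.ofReal_pos.2 (hlamR x)).ne'
  have hwtop : ∀ x, w x ≠ ⊤ := fun x => ENNReal.ofReal_ne_top
  set g : EuclideanSpace ℝ (Fin d) → ENNReal := fun x => ENNReal.ofReal (U x) with hgdef
  have hgmeas : Measurable g := ENNReal.measurable_ofReal.comp hUcont.measurable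
  have hRintμ : IntegrableOn (fun x => lam - R' x) S μ :=
    (continuous_const.sub hR'cont).continuousOn.integrableOn_compact hScomp
  have hURint : IntegrableOn (fun x => U x * (lam - R' x)) S volume :=
    (hUcont.mul (continuous_const.sub hR'cont)).continuousOn.integrableOn_compact hScomp
  have E1 : (μ.restrict S).withDensity w
      = (volume.restrict S).withDensity (fun x => g x * w x) := by
    ext A hA
    rw [withDensity_apply _ hA, withDensity_apply _ hA,
      Measure.restrict_restrict hA, Measure.restrict_restrict hA]
    set B := A ∩ S with hBdef
    have hBmeas : MeasurableSet B := hA.inter hSmeas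
    have hBS : B ⊆ S := Set.inter_subset_right
    calc ∫⁻ x in B, w x ∂μ
        = ENNReal.ofReal (∫ x in B, (lam - R' x) ∂μ) :=
          (ofReal_integral_eq_lintegral_ofReal (hRintμ.mono_set hBS)
            (Eventually.of_forall fun x => (hlamR x).le)).symm
      _ = ENNReal.ofReal (∫ x in B, (lam - r x) ∂μ) := by
          rw [setIntegral_congr_fun hBmeas (fun x hx => by rw [hR'S x (hBS hx)])]
      _ = ENNReal.ofReal (∫ x in B, v x) := by rw [key B hBmeas hBS]
      _ = ENNReal.ofReal (∫ x in B, U x * (lam - R' x)) := by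
          congr 1
          apply setIntegral_congr_fun hBmeas
          intro x hx
          show v x = U x * (lam - R' x)
          rw [huv x (hBS hx), hUS x (hBS hx), hR'S x (hBS hx)]
      _ = ∫⁻ x in B, ENNReal.ofReal (U x * (lam - R' x)) :=
          ofReal_integral_eq_lintegral_ofReal (hURint.mono_set hBS)
            ((ae_restrict_iff' hBmeas).2 (Eventually.of_forall fun x hx =>
              mul_nonneg (by rw [hUS x (hBS hx)]; exact hunn x (hBS hx)) (hlamR x).le))
      _ = ∫⁻ x in B, g x * w x := by
          apply setLIntegral_congr_fun hBmeas
          intro x hx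
          rw [hgdef, hwdef]
          exact ENNReal.ofReal_mul (by rw [hUS x (hBS hx)]; exact hunn x (hBS hx))
  set winv : EuclideanSpace ℝ (Fin d) → ENNReal := fun x => (w x)⁻¹ with hwinvdef
  have hwinvmeas : Measurable winv := hwmeas.inv
  have E2 : μ.restrict S = (volume.restrict S).withDensity g := by
    have h1 : μ.restrict S = ((μ.restrict S).withDensity w).withDensity winv := by
      rw [← withDensity_mul _ hwmeas hwinvmeas]
      have hc : w * winv = 1 := by
        funext x
        show w x * (w x)⁻¹ = 1
        exact ENNReal.mul_inv_cancel (hwpos x) (hwtop x)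
      rw [hc, withDensity_one]
    have h2 : ((volume.restrict S).withDensity fun x => g x * w x).withDensity winv
        = (volume.restrict S).withDensity g := by
      rw [show (fun x => g x * w x) = g * w from rfl, ← withDensity_mul _ (hgmeas.mul hwmeas) hwinvmeas]
      congr 1
      funext x
      show g x * w x * (w x)⁻¹ = g x
      rw [mul_assoc, ENNReal.mul_inv_cancel (hwpos x) (hwtop x), mul_one]
    rw [h1, E1, h2]
  -- the density statement
  have hden : ∀ A : Set (EuclideanSpace ℝ (Fin d)), MeasurableSet A → A ⊆ S →
      (μ A).toReal = ∫ x in A, u x := by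
    intro A hA hAS
    have hUnnA : ∀ x ∈ A, 0 ≤ U x := fun x hx => by
      rw [hUS x (hAS hx)]; exact hunn x (hAS hx)
    have h1 : μ A = ENNReal.ofReal (∫ x in A, U x) := by
      calc μ A = (μ.restrict S) A := (Measure.restrict_eq_self μ hAS).symm
        _ = ((volume.restrict S).withDensity g) A := by rw [E2]
        _ = ∫⁻ x in A, g x ∂(volume.restrict S) := withDensity_apply _ hA
        _ = ∫⁻ x in A ∩ S, g x ∂volume := by rw [Measure.restrict_restrict hA]
        _ = ∫⁻ x in A, g x ∂volume := by
            rw [Set.inter_eq_self_of_subset_left hAS]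
        _ = ENNReal.ofReal (∫ x in A, U x) :=
            (ofReal_integral_eq_lintegral_ofReal
              (hUcont.continuousOn.integrableOn_compact hScomp |>.mono_set hAS)
              ((ae_restrict_iff' hA).2 (Eventually.of_forall hUnnA))).symm
    rw [h1, ENNReal.toReal_ofReal (setIntegral_nonneg hA hUnnA)]
    exact setIntegral_congr_fun hA (fun x hx => hUS x (hAS hx))
  -- μ S is positive
  have hμS0 : μ S ≠ 0 := by
    intro h0
    apply hμne
    rw [← Measure.measure_univ_eq_zero, ← measure_add_measure_compl hSmeas, h0, hμS, add_zero]
  -- zero propagation via the kernel lower bound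
  have hprop : ∀ x ∈ S, v x = 0 → ∀ z ∈ S, dist z x < ε₀ → v z = 0 := by
    intro x hx hvx z hz hdz
    have hae : (fun y => K y x) =ᵐ[μ.restrict S] 0 :=
      (integral_eq_zero_iff_of_nonneg_ae
        ((ae_restrict_iff' hSmeas).2 (Eventually.of_forall fun y hy => hKnn y hy x hx))
        (hKint x hx)).1 hvx
    set T := S ∩ Metric.ball x ε₀ with hTdef
    have hTmeas : MeasurableSet T := hSmeas.inter measurableSet_ball
    have hTS : T ⊆ S := Set.inter_subset_left
    have hμT : μ T = 0 := by
      have h2 : T ⊆ {y | ¬ (fun y => K y x) y = (0 : EuclideanSpace ℝ (Fin d) → ℝ) y} := by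
        intro y hy
        have hKp : c₀ < K y x :=
          hKlb y (hTS hy) x hx (by rw [dist_comm]; exact Metric.mem_ball.1 hy.2)
        exact fun h => by simp only [Pi.zero_apply] at h; linarith
      refine le_antisymm ?_ zero_le
      calc μ T = μ.restrict S T := (Measure.restrict_eq_self μ hTS).symm
        _ ≤ μ.restrict S {y | ¬ (fun y => K y x) y = (0 : EuclideanSpace ℝ (Fin d) → ℝ) y} :=
            measure_mono h2
        _ = 0 := ae_iff.1 hae
    -- u vanishes on T
    have hu0 : ∀ z' ∈ T, u z' = 0 := by
      intro z' hz'
      by_contra h0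
      have hz'S : z' ∈ S := hTS hz'
      have hupos : 0 < u z' := lt_of_le_of_ne (hunn z' hz'S) (Ne.symm h0)
      obtain ⟨δ, hδpos, hδ⟩ :=
        Metric.continuousWithinAt_iff.1 (hucont z' hz'S) (u z' / 2) (by positivity)
      have hz'd : dist z' x < ε₀ := Metric.mem_ball.1 hz'.2
      set δ' := min δ (ε₀ - dist z' x) with hδ'def
      have hδ'pos : 0 < δ' := lt_min hδpos (by linarith)
      set W := S ∩ Metric.ball z' δ' with hWdef
      have hWT : W ⊆ T := by
        intro y hy
        refine ⟨hy.1, Metric.mem_ball.2 ?_⟩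
        have h1 : dist y z' < δ' := Metric.mem_ball.1 hy.2
        have h2 : δ' ≤ ε₀ - dist z' x := min_le_right _ _
        calc dist y x ≤ dist y z' + dist z' x := dist_triangle _ _ _
          _ < δ' + dist z' x := by linarith
          _ ≤ (ε₀ - dist z' x) + dist z' x := by linarith
          _ = ε₀ := by ring
      have hWmeas : MeasurableSet W := hSmeas.inter measurableSet_ball
      have hWS : W ⊆ S := Set.inter_subset_left
      have hWvol : 0 < volume W := by
        have hz'cl : z' ∈ closure Ω := hSdef ▸ hz'S
        have hne : (Metric.ball z' δ' ∩ Ω).Nonempty :=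
          mem_closure_iff.1 hz'cl _ Metric.isOpen_ball (Metric.mem_ball_self hδ'pos)
        have hopen : IsOpen (Metric.ball z' δ' ∩ Ω) := Metric.isOpen_ball.inter hΩopen
        refine lt_of_lt_of_le (hopen.measure_pos volume hne) (measure_mono ?_)
        exact fun y hy => ⟨hΩsub hy.2, hy.1⟩
      have hWvolfin : volume W ≠ ⊤ := (lt_of_le_of_lt (measure_mono hWS) hSvolfin).ne
      have hmono : ∀ y ∈ W, u z' / 2 ≤ u y := by
        intro y hy
        have hd := hδ hy.1 (lt_of_lt_of_le (Metric.mem_ball.1 hy.2) (min_le_left _ _))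
        rw [Real.dist_eq] at hd
        have h3 := abs_lt.1 hd
        linarith [h3.1]
      have hlow : u z' / 2 * (volume W).toReal ≤ ∫ x' in W, u x' :=
        setIntegral_ge_of_const_le_real hWmeas hWvolfin hmono (huint.mono_set hWS)
      have h0T : ∫ x' in T, u x' = 0 := by
        rw [← hden T hTmeas hTS, hμT]
        simp
      have h1 : ∫ x' in W, u x' ≤ ∫ x' in T, u x' := by
        apply setIntegral_mono_set (huint.mono_set hTS)
        · exact (ae_restrict_iff' hTmeas).2 (Eventually.of_forall fun y hy => hunn y (hTS hy))
        · exact HasSubset.Subset.eventuallyLE hWT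
      have h3 : 0 < u z' / 2 * (volume W).toReal := by
        apply mul_pos (by positivity)
        exact ENNReal.toReal_pos hWvol.ne' hWvolfin
      linarith
    rw [huv z hz, hu0 z ⟨hz, Metric.mem_ball.2 hdz⟩, zero_mul]
  -- positivity of v on S via connectedness
  have hvpos : ∀ x ∈ S, 0 < v x := by
    by_contra hcon
    push_neg at hcon
    obtain ⟨x₀, hx₀S, hx₀⟩ := hcon
    have hvx₀ : v x₀ = 0 := le_antisymm hx₀ (hvnn x₀ hx₀S)
    have hall : ∀ x ∈ S, v x = 0 := by
      by_contra hP
      push_neg at hP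
      obtain ⟨x₁, hx₁S, hx₁⟩ := hP
      have hvx₁ : 0 < v x₁ := lt_of_le_of_ne (hvnn x₁ hx₁S) (Ne.symm hx₁)
      have hδex : ∀ x, x ∈ S → 0 < v x → ∃ δ, 0 < δ ∧ ∀ y ∈ S, dist y x < δ → 0 < v y := by
        intro x hx hvx
        obtain ⟨δ, hδpos, hδ⟩ := Metric.continuousWithinAt_iff.1 (hvcont x hx) (v x) hvx
        refine ⟨δ, hδpos, fun y hy hdy => ?_⟩
        have h1 := hδ hy hdy
        rw [Real.dist_eq] at h1
        have h2 := abs_lt.1 h1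
        linarith [h2.1]
      choose! δf hδfpos hδf using hδex
      set Uo := ⋃ x ∈ {x ∈ S | v x = 0}, Metric.ball x ε₀ with hUodef
      set Vo := ⋃ x ∈ {x ∈ S | 0 < v x}, Metric.ball x (δf x) with hVodef
      have hUoopen : IsOpen Uo := isOpen_biUnion fun _ _ => Metric.isOpen_ball
      have hVoopen : IsOpen Vo := isOpen_biUnion fun _ _ => Metric.isOpen_ball
      have hcover : S ⊆ Uo ∪ Vo := by
        intro x hx
        rcases eq_or_lt_of_le (hvnn x hx) with h0 | hpos
        · exact Or.inl (Set.mem_biUnion (Set.mem_sep hx h0.symm) (Metric.mem_ball_self hε₀))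
        · exact Or.inr (Set.mem_biUnion (Set.mem_sep hx hpos)
            (Metric.mem_ball_self (hδfpos x hx hpos)))
      have hUz : ∀ x ∈ S ∩ Uo, v x = 0 := by
        rintro x ⟨hxS, hxU⟩
        obtain ⟨x', hx', hxball⟩ := Set.mem_iUnion₂.1 hxU
        exact hprop x' hx'.1 hx'.2 x hxS (Metric.mem_ball.1 hxball)
      have hVp : ∀ x ∈ S ∩ Vo, 0 < v x := by
        rintro x ⟨hxS, hxV⟩
        obtain ⟨x', hx', hxball⟩ := Set.mem_iUnion₂.1 hxV
        exact hδf x' hx'.1 hx'.2 x hxS (Metric.mem_ball.1 hxball)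
      have hne := hSconn Uo Vo hUoopen hVoopen hcover
        ⟨x₀, hx₀S, Set.mem_biUnion (Set.mem_sep hx₀S hvx₀) (Metric.mem_ball_self hε₀)⟩
        ⟨x₁, hx₁S, Set.mem_biUnion (Set.mem_sep hx₁S hvx₁)
          (Metric.mem_ball_self (hδfpos x₁ hx₁S hvx₁))⟩
      obtain ⟨y, hyS, hyU, hyV⟩ := hne
      exact absurd (hUz y ⟨hyS, hyU⟩) (ne_of_gt (hVp y ⟨hyS, hyV⟩))
    apply hμS0
    have h1 : (μ S).toReal = 0 := by
      rw [hden S hSmeas subset_rfl]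
      have hEq : Set.EqOn u (fun _ => (0 : ℝ)) S := by
        intro x hx
        show u x = 0
        have h2 := huv x hx
        rw [hall x hx] at h2
        rcases mul_eq_zero.1 h2.symm with h | h
        · exact h
        · exact absurd h (hlr x hx).ne'
      rw [setIntegral_congr_fun hSmeas hEq]
      simp
    rcases (ENNReal.toReal_eq_zero_iff _).1 h1 with h | h
    · exact h
    · exact absurd h (measure_ne_top μ S)
  have hupos : ∀ x ∈ S, 0 < u x := fun x hx => by
    rw [hu x]
    exact div_pos (hvpos x hx) (hlr x hx)
  -- the eigen-equation
  have hfin : ∀ x ∈ S, r x * u x + (∫ y in S, K y x * u y) = lam * u x := by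
    intro x hx
    have hJ : (∫ y in S, K y x * u y) = v x := by
      have hmeas : Measurable (fun y => (U y).toNNReal) :=
        measurable_real_toNNReal.comp hUcont.measurable
      have h1 : (∫ y in S, K y x * u y)
          = ∫ y, ((U y).toNNReal : ℝ) • K y x ∂(volume.restrict S) := by
        apply setIntegral_congr_fun hSmeas
        intro y hy
        show K y x * u y = ((U y).toNNReal : ℝ) • K y x
        rw [smul_eq_mul, Real.coe_toNNReal _ (by rw [hUS y hy]; exact hunn y hy),
          hUS y hy, mul_comm]
      have h2 : (∫ y, ((U y).toNNReal : ℝ) • K y x ∂(volume.restrict S))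
          = ∫ y, K y x ∂((volume.restrict S).withDensity fun y => ((U y).toNNReal : ENNReal)) :=
        (integral_withDensity_eq_integral_smul hmeas _).symm
      have h3 : ((volume.restrict S).withDensity fun y => ((U y).toNNReal : ENNReal))
          = μ.restrict S := by
        rw [E2]
        rfl
      rw [h1, h2, h3]
    rw [hJ, huv x hx]
    ring
  exact ⟨hucont, hupos, hden, hfin⟩
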